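/- Let H be a compact quantum group with normal integral φ and inner product ⟨x, y⟩ = φ(S(y∘)x). The Nakayama automorphism N (defined by φ(xy) = φ(y N(x))) is a positive operator: ⟨N(x), x⟩ = ⟨S(x∘), S(x∘)⟩ > 0 for all x ≠ 0. Moreover N commutes with ∘: N(x∘) = N(x)∘. -/

import Mathlib

open TensorProduct Coalgebra HopfAlgebra

variable {H : Type*} [Ring H] [HopfAlgebra ℂ H]

/-- `φ` is a right integral: `Σ φ(x₁) x₂ = φ(x) 1`. -/
def IsRightIntegral (φ : H →ₗ[ℂ] ℂ) : Prop :=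
  ∀ x : H,
    TensorProduct.lid ℂ H ((LinearMap.rTensor H φ) (Coalgebra.comul (R := ℂ) x)) = φ x • 1

/-- `φ` is a left integral: `Σ x₁ φ(x₂) = φ(x) 1`. -/
def IsLeftIntegral (φ : H →ₗ[ℂ] ℂ) : Prop :=
  ∀ x : H,
    TensorProduct.rid ℂ H ((LinearMap.lTensor H φ) (Coalgebra.comul (R := ℂ) x)) = φ x • 1

/-- The sesquilinear form `⟨x, y⟩ = φ(S(y∘) x)` attached to the integral `φ`. -/
noncomputable def intInner (circ : H → H) (φ : H →ₗ[ℂ] ℂ) (x y : H) : ℂ :=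
  φ (antipode (R := ℂ) (circ y) * x)

set_option linter.unusedSectionVars false

universe u w

section AuxHopf
variable {G : Type u} [Ring G] [HopfAlgebra ℂ G]

section Conv
variable {C B : Type*} [AddCommMonoid C] [Module ℂ C] [Coalgebra ℂ C]
  [AddCommMonoid B] [Module ℂ B]

/-- Convolution of two linear maps from a coalgebra into a "multiplication" `m`. -/
noncomputable def conv (m : B →ₗ[ℂ] B →ₗ[ℂ] B) (f g : C →ₗ[ℂ] B) : C →ₗ[ℂ] B :=
  (TensorProduct.lift m) ∘ₗ (TensorProduct.map f g) ∘ₗ (Coalgebra.comul (R := ℂ))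

/-- Convolution unit attached to an element `e`. -/
noncomputable def cunit (e : B) : C →ₗ[ℂ] B :=
  (LinearMap.toSpanSingleton ℂ B e) ∘ₗ (Coalgebra.counit (R := ℂ))

lemma cunit_apply (e : B) (c : C) : cunit e c = Coalgebra.counit (R := ℂ) c • e := rfl

lemma sum_counit_smul {c : C} {ι : Type*} (r : Coalgebra.Repr ℂ c ι) :
    ∑ i ∈ r.index, Coalgebra.counit (R := ℂ) (r.left i) • r.right i = c := by
  have h := congrArg (⇑(TensorProduct.lid ℂ C)) (Coalgebra.sum_counit_tmul_eq r)
  simp only [map_sum, TensorProduct.lid_tmul] at h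
  simpa using h

lemma sum_smul_counit {c : C} {ι : Type*} (r : Coalgebra.Repr ℂ c ι) :
    ∑ i ∈ r.index, Coalgebra.counit (R := ℂ) (r.right i) • r.left i = c := by
  have h := congrArg (⇑(TensorProduct.rid ℂ C)) (Coalgebra.sum_tmul_counit_eq r)
  simp only [map_sum, TensorProduct.rid_tmul] at h
  simpa using h

lemma conv_apply (m : B →ₗ[ℂ] B →ₗ[ℂ] B) (f g : C →ₗ[ℂ] B) {c : C} {ι : Type*}
    (r : Coalgebra.Repr ℂ c ι) :
    conv m f g c = ∑ i ∈ r.index, m (f (r.left i)) (g (r.right i)) := by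
  simp only [conv, LinearMap.coe_comp, Function.comp_apply]
  rw [← r.eq, map_sum, map_sum]
  simp [TensorProduct.map_tmul, TensorProduct.lift.tmul]

lemma conv_assoc (m : B →ₗ[ℂ] B →ₗ[ℂ] B)
    (hm : ∀ a b c : B, m (m a b) c = m a (m b c)) (f g h : C →ₗ[ℂ] B) :
    conv m (conv m f g) h = conv m f (conv m g h) := by
  ext c
  classical
  set r := ℛ ℂ c with hrdef
  have key := Coalgebra.sum_map_tmul_tmul_eq (R := ℂ) f g h c (repr := r)
    (a₁ := fun i => ℛ ℂ (r.left i)) (a₂ := fun i => ℛ ℂ (r.right i))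
  have mukey := congrArg
    (⇑((TensorProduct.lift m) ∘ₗ (LinearMap.lTensor B (TensorProduct.lift m)))) key
  simp only [map_sum, LinearMap.coe_comp, Function.comp_apply, LinearMap.lTensor_tmul,
    TensorProduct.lift.tmul] at mukey
  rw [conv_apply m (conv m f g) h r, conv_apply m f (conv m g h) r]
  calc ∑ i ∈ r.index, m ((conv m f g) (r.left i)) (h (r.right i))
      = ∑ i ∈ r.index, ∑ j ∈ (ℛ ℂ (r.left i)).index,
          m (m (f ((ℛ ℂ (r.left i)).left j)) (g ((ℛ ℂ (r.left i)).right j))) (h (r.right i)) := by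
        refine Finset.sum_congr rfl fun i _ => ?_
        rw [conv_apply m f g (ℛ ℂ (r.left i)), map_sum, LinearMap.sum_apply]
    _ = ∑ i ∈ r.index, ∑ j ∈ (ℛ ℂ (r.left i)).index,
          m (f ((ℛ ℂ (r.left i)).left j)) (m (g ((ℛ ℂ (r.left i)).right j)) (h (r.right i))) := by
        simp_rw [hm]
    _ = ∑ i ∈ r.index, ∑ j ∈ (ℛ ℂ (r.right i)).index,
          m (f (r.left i)) (m (g ((ℛ ℂ (r.right i)).left j)) (h ((ℛ ℂ (r.right i)).right j))) :=
        mukey.symm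
    _ = ∑ i ∈ r.index, m (f (r.left i)) ((conv m g h) (r.right i)) := by
        refine Finset.sum_congr rfl fun i _ => ?_
        rw [conv_apply m g h (ℛ ℂ (r.right i)), map_sum]
    _ = ∑ i ∈ r.index, m (f (r.left i)) ((conv m g h) (r.right i)) := rfl

lemma conv_cunit_left (m : B →ₗ[ℂ] B →ₗ[ℂ] B) (e : B) (he : ∀ b : B, m e b = b)
    (f : C →ₗ[ℂ] B) : conv m (cunit e) f = f := by
  ext c
  rw [conv_apply m (cunit e) f (ℛ ℂ c)]
  have : ∀ i ∈ (ℛ ℂ c).index,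
      m (cunit e ((ℛ ℂ c).left i)) (f ((ℛ ℂ c).right i))
        = f (Coalgebra.counit (R := ℂ) ((ℛ ℂ c).left i) • (ℛ ℂ c).right i) := by
    intro i _
    rw [cunit_apply, map_smul, LinearMap.smul_apply, he, map_smul]
  rw [Finset.sum_congr rfl this, ← map_sum, _root_.sum_counit_smul]

lemma conv_cunit_right (m : B →ₗ[ℂ] B →ₗ[ℂ] B) (e : B) (he : ∀ b : B, m b e = b)
    (f : C →ₗ[ℂ] B) : conv m f (cunit e) = f := by
  ext c
  rw [conv_apply m f (cunit e) (ℛ ℂ c)]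
  have : ∀ i ∈ (ℛ ℂ c).index,
      m (f ((ℛ ℂ c).left i)) (cunit e ((ℛ ℂ c).right i))
        = f (Coalgebra.counit (R := ℂ) ((ℛ ℂ c).right i) • (ℛ ℂ c).left i) := by
    intro i _
    rw [cunit_apply, map_smul, he, map_smul]
  rw [Finset.sum_congr rfl this, ← map_sum, sum_smul_counit]

lemma conv_cancel (m : B →ₗ[ℂ] B →ₗ[ℂ] B) (e : B)
    (hm : ∀ a b c : B, m (m a b) c = m a (m b c))
    (hel : ∀ b : B, m e b = b) (her : ∀ b : B, m b e = b)
    {f g h : C →ₗ[ℂ] B} (hfg : conv m f g = cunit e) (hgh : conv m g h = cunit e) :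
    f = h := by
  calc f = conv m f (cunit e) := (conv_cunit_right m e her f).symm
    _ = conv m f (conv m g h) := by rw [hgh]
    _ = conv m (conv m f g) h := (conv_assoc m hm f g h).symm
    _ = conv m (cunit e) h := by rw [hfg]
    _ = h := conv_cunit_left m e hel h

end Conv
variable {G : Type u} [Ring G] [HopfAlgebra ℂ G]

lemma my_antipode_one : antipode (R := ℂ) (1 : G) = 1 := by
  have h := HopfAlgebra.sum_antipode_mul_eq_algebraMap_counit (R := ℂ)
    (⟨({0} : Finset ℕ), fun _ => (1 : G), fun _ => (1 : G), by
      simp [Algebra.TensorProduct.one_def]⟩ : Coalgebra.Repr ℂ (1 : G) ℕ)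
  simp only [Finset.sum_singleton, mul_one, Bialgebra.counit_one, map_one] at h
  exact h

/-- Product representation of `comul (x * y)`. -/
noncomputable def mulRepr {ι κ : Type*} (x y : G) (rx : Coalgebra.Repr ℂ x ι)
    (ry : Coalgebra.Repr ℂ y κ) :
    Coalgebra.Repr ℂ (x * y) (ι × κ) where
  index := rx.index ×ˢ ry.index
  left := fun p => rx.left p.1 * ry.left p.2
  right := fun p => rx.right p.1 * ry.right p.2
  eq := by
    show ∑ p ∈ rx.index ×ˢ ry.index,
      (rx.left p.1 * ry.left p.2) ⊗ₜ[ℂ] (rx.right p.1 * ry.right p.2) = Coalgebra.comul (x * y)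
    rw [Finset.sum_product (f := fun p =>
      (rx.left p.1 * ry.left p.2) ⊗ₜ[ℂ] (rx.right p.1 * ry.right p.2)),
      Bialgebra.comul_mul, ← rx.eq, ← ry.eq, Finset.sum_mul_sum]
    simp [Algebra.TensorProduct.tmul_mul_tmul]

lemma mulRepr_index {ι κ : Type*} (x y : G) (rx : Coalgebra.Repr ℂ x ι) (ry : Coalgebra.Repr ℂ y κ) :
    (mulRepr x y rx ry).index = rx.index ×ˢ ry.index := rfl

lemma mulRepr_left {ι κ : Type*} (x y : G) (rx : Coalgebra.Repr ℂ x ι) (ry : Coalgebra.Repr ℂ y κ)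
    (p : rx.ι × ry.ι) : (mulRepr x y rx ry).left p = rx.left p.1 * ry.left p.2 := rfl

lemma mulRepr_right {ι κ : Type*} (x y : G) (rx : Coalgebra.Repr ℂ x ι) (ry : Coalgebra.Repr ℂ y κ)
    (p : rx.ι × ry.ι) : (mulRepr x y rx ry).right p = rx.right p.1 * ry.right p.2 := rfl

noncomputable def mulH : G →ₗ[ℂ] G →ₗ[ℂ] G := LinearMap.mul ℂ G

lemma mulH_apply (a b : G) : mulH a b = a * b := rfl

noncomputable def m2 :  (G →ₗ[ℂ] G) →ₗ[ℂ]  (G →ₗ[ℂ] G) →ₗ[ℂ]  (G →ₗ[ℂ] G) :=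
  LinearMap.mk₂ ℂ (fun f g => conv mulH f g)
    (fun f f' g => by
      unfold conv
      rw [TensorProduct.map_add_left, LinearMap.add_comp, LinearMap.comp_add])
    (fun a f g => by
      unfold conv
      rw [TensorProduct.map_smul_left, LinearMap.smul_comp, LinearMap.comp_smul])
    (fun f g g' => by
      unfold conv
      rw [TensorProduct.map_add_right, LinearMap.add_comp, LinearMap.comp_add])
    (fun a f g => by
      unfold conv
      rw [TensorProduct.map_smul_right, LinearMap.smul_comp, LinearMap.comp_smul])

lemma m2_apply (f g : G →ₗ[ℂ] G) : m2 f g = conv mulH f g := rfl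

/-- `Fm x y = S (x * y)`. -/
noncomputable def Fm : G →ₗ[ℂ] G →ₗ[ℂ] G where
  toFun x := (antipode (R := ℂ)).comp (LinearMap.mulLeft ℂ x)
  map_add' x x' := by ext y; simp [add_mul]
  map_smul' a x := by ext y; simp [smul_mul_assoc]

lemma Fm_apply (x y : G) : Fm x y = antipode (R := ℂ) (x * y) := rfl

/-- `Gm x y = S y * S x`. -/
noncomputable def Gm : G →ₗ[ℂ] G →ₗ[ℂ] G where
  toFun x := (LinearMap.mulRight ℂ (antipode (R := ℂ) x)).comp (antipode (R := ℂ))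
  map_add' x x' := by ext y; simp [mul_add]
  map_smul' a x := by ext y; simp [mul_smul_comm]

lemma Gm_apply (x y : G) : Gm x y = antipode (R := ℂ) y * antipode (R := ℂ) x := rfl

lemma conv_Fm_mulH : conv m2 Fm mulH = cunit (cunit (1 : G)) := by
  apply LinearMap.ext; intro x; apply LinearMap.ext; intro y
  rw [conv_apply m2 Fm mulH (ℛ ℂ x), LinearMap.sum_apply]
  have hterm : ∀ i ∈ (ℛ ℂ x).index,
      (m2 (Fm ((ℛ ℂ x).left i)) (mulH ((ℛ ℂ x).right i))) y
        = ∑ j ∈ (ℛ ℂ y).index,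
            antipode (R := ℂ) ((ℛ ℂ x).left i * (ℛ ℂ y).left j) *
              ((ℛ ℂ x).right i * (ℛ ℂ y).right j) := by
    intro i _
    rw [m2_apply, conv_apply mulH _ _ (ℛ ℂ y)]
    simp [Fm_apply, mulH_apply]
  rw [Finset.sum_congr rfl hterm]
  have h := HopfAlgebra.sum_antipode_mul_eq_smul (R := ℂ) (mulRepr x y (ℛ ℂ x) (ℛ ℂ y))
  have h2 : ∑ p ∈ (ℛ ℂ x).index ×ˢ (ℛ ℂ y).index,
      antipode (R := ℂ) ((ℛ ℂ x).left p.1 * (ℛ ℂ y).left p.2) *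
        ((ℛ ℂ x).right p.1 * (ℛ ℂ y).right p.2)
      = Coalgebra.counit (R := ℂ) (x * y) • (1 : G) := h
  rw [Finset.sum_product' (f := fun i j => antipode (R := ℂ)
      ((ℛ ℂ x).left i * (ℛ ℂ y).left j) * ((ℛ ℂ x).right i * (ℛ ℂ y).right j))] at h2
  rw [h2, Bialgebra.counit_mul, cunit_apply, LinearMap.smul_apply, cunit_apply, mul_smul]

lemma conv_mulH_Gm : conv m2 mulH Gm = cunit (cunit (1 : G)) := by
  apply LinearMap.ext; intro x; apply LinearMap.ext; intro y
  rw [conv_apply m2 mulH Gm (ℛ ℂ x), LinearMap.sum_apply]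
  have hterm : ∀ i ∈ (ℛ ℂ x).index,
      (m2 (mulH ((ℛ ℂ x).left i)) (Gm ((ℛ ℂ x).right i))) y
        = Coalgebra.counit (R := ℂ) y •
            ((ℛ ℂ x).left i * antipode (R := ℂ) ((ℛ ℂ x).right i)) := by
    intro i _
    rw [m2_apply, conv_apply mulH _ _ (ℛ ℂ y)]
    have : ∀ j ∈ (ℛ ℂ y).index,
        mulH (mulH ((ℛ ℂ x).left i) ((ℛ ℂ y).left j))
            (Gm ((ℛ ℂ x).right i) ((ℛ ℂ y).right j))
          = (ℛ ℂ x).left i *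
              (((ℛ ℂ y).left j * antipode (R := ℂ) ((ℛ ℂ y).right j)) *
                antipode (R := ℂ) ((ℛ ℂ x).right i)) := by
      intro j _
      simp only [mulH_apply, Gm_apply, mul_assoc]
    rw [Finset.sum_congr rfl this, ← Finset.mul_sum, ← Finset.sum_mul,
      HopfAlgebra.sum_mul_antipode_eq_smul (R := ℂ) (ℛ ℂ y)]
    rw [smul_mul_assoc, one_mul, mul_smul_comm]
  rw [Finset.sum_congr rfl hterm, ← Finset.smul_sum,
    HopfAlgebra.sum_mul_antipode_eq_smul (R := ℂ) (ℛ ℂ x)]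
  rw [cunit_apply, LinearMap.smul_apply, cunit_apply]
  rw [smul_smul, smul_smul, mul_comm]

lemma my_antipode_mul (x y : G) :
    antipode (R := ℂ) (x * y) = antipode (R := ℂ) y * antipode (R := ℂ) x := by
  have hc : Fm  (G := G) = Gm := by
    refine conv_cancel m2 (cunit (1 : G)) ?_ ?_ ?_ conv_Fm_mulH conv_mulH_Gm
    · intro a b c
      rw [m2_apply, m2_apply, m2_apply, m2_apply]
      exact conv_assoc mulH (fun p q r => mul_assoc p q r) a b c
    · intro b
      rw [m2_apply]
      exact conv_cunit_left mulH 1 (fun v => one_mul v) b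
    · intro b
      rw [m2_apply]
      exact conv_cunit_right mulH 1 (fun v => mul_one v) b
  have := LinearMap.congr_fun (LinearMap.congr_fun hc x) y
  rwa [Fm_apply, Gm_apply] at this


/-- Reindex a representation by `ULift ℕ` in an arbitrary universe. -/
noncomputable def natRepr {C : Type*} [AddCommMonoid C] [Module ℂ C] [Coalgebra ℂ C]
    {x : C} {ι : Type*} (r : Coalgebra.Repr ℂ x ι) : Coalgebra.Repr ℂ x (ULift.{w} ℕ) where
  index := (Finset.range r.index.card).map (Equiv.ulift.{w}).symm.toEmbedding
  left := fun i => if h : i.down < r.index.card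
    then r.left (r.index.equivFin.symm ⟨i.down, h⟩) else 0
  right := fun i => if h : i.down < r.index.card
    then r.right (r.index.equivFin.symm ⟨i.down, h⟩) else 0
  eq := by
    rw [Finset.sum_map, ← Fin.sum_univ_eq_sum_range]
    have h1 : ∀ k : Fin r.index.card,
        (if h : ((Equiv.ulift.{w}.symm.toEmbedding (k : ℕ) : ULift ℕ)).down < r.index.card
          then r.left (r.index.equivFin.symm ⟨_, h⟩) else 0) ⊗ₜ[ℂ]
        (if h : ((Equiv.ulift.{w}.symm.toEmbedding (k : ℕ) : ULift ℕ)).down < r.index.card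
          then r.right (r.index.equivFin.symm ⟨_, h⟩) else 0)
          = r.left (r.index.equivFin.symm k) ⊗ₜ[ℂ] r.right (r.index.equivFin.symm k) := by
      intro k
      simp [Equiv.ulift, Fin.eta]
    rw [Finset.sum_congr rfl fun k _ => h1 k]
    rw [Equiv.sum_comp (r.index.equivFin.symm)
      (fun p => r.left ↑p ⊗ₜ[ℂ] r.right ↑p)]
    rw [Finset.sum_coe_sort r.index (fun p => r.left p ⊗ₜ[ℂ] r.right p)]
    exact r.eq

variable {G : Type u} [Ring G] [HopfAlgebra ℂ G]


lemma circ_sum (circ : G → G) (hcadd : ∀ x y : G, circ (x + y) = circ x + circ y)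
    {ι : Type*} (s : Finset ι) (f : ι → G) :
    circ (∑ i ∈ s, f i) = ∑ i ∈ s, circ (f i) :=
  map_sum (AddMonoidHom.mk' circ hcadd) f s

lemma circ_one (circ : G → G) (hcinvol : ∀ x : G, circ (circ x) = x)
    (hcmul : ∀ x y : G, circ (x * y) = circ x * circ y) : circ 1 = 1 := by
  have h1 := hcmul (circ 1) 1
  rw [mul_one, hcinvol] at h1
  rw [one_mul] at h1
  exact h1.symm

/-- `T = circ ∘ S ∘ circ` as a `ℂ`-linear map. -/
noncomputable def Tlin (circ : G → G)
    (hcadd : ∀ x y : G, circ (x + y) = circ x + circ y)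
    (hcsmul : ∀ (a : ℂ) (x : G), circ (a • x) = (starRingEnd ℂ) a • circ x) :
    G →ₗ[ℂ] G where
  toFun v := circ (antipode (R := ℂ) (circ v))
  map_add' a b := by simp only [hcadd, map_add]
  map_smul' a v := by
    simp only [hcsmul, map_smul, Complex.conj_conj, RingHom.id_apply]

lemma Tlin_apply (circ : G → G)
    (hcadd : ∀ x y : G, circ (x + y) = circ x + circ y)
    (hcsmul : ∀ (a : ℂ) (x : G), circ (a • x) = (starRingEnd ℂ) a • circ x) (v : G) :
    Tlin circ hcadd hcsmul v = circ (antipode (R := ℂ) (circ v)) := rfl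

/-- The flipped representation of `comul (circ z)`. -/
noncomputable def circRepr (circ : G → G)
    (hcanti : ∀ (x : G) (ι : Type w) (r : Coalgebra.Repr ℂ x ι),
      Coalgebra.comul (R := ℂ) (circ x) =
        ∑ i ∈ r.index, circ (r.right i) ⊗ₜ[ℂ] circ (r.left i))
    (z : G) {ι : Type w} (r : Coalgebra.Repr ℂ z ι) : Coalgebra.Repr ℂ (circ z) ι where
  index := r.index
  left := fun i => circ (r.right i)
  right := fun i => circ (r.left i)
  eq := (hcanti z ι r).symm

lemma counit_circ (circ : G → G)
    (hcadd : ∀ x y : G, circ (x + y) = circ x + circ y)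
    (hcsmul : ∀ (a : ℂ) (x : G), circ (a • x) = (starRingEnd ℂ) a • circ x)
    (hcinvol : ∀ x : G, circ (circ x) = x)
    (hcanti : ∀ (x : G) (ι : Type w) (r : Coalgebra.Repr ℂ x ι),
      Coalgebra.comul (R := ℂ) (circ x) =
        ∑ i ∈ r.index, circ (r.right i) ⊗ₜ[ℂ] circ (r.left i))
    (x : G) :
    Coalgebra.counit (R := ℂ) (circ x) = starRingEnd ℂ (Coalgebra.counit (R := ℂ) x) := by
  set g : G →ₗ[ℂ] ℂ :=
    { toFun := fun v => starRingEnd ℂ (Coalgebra.counit (R := ℂ) (circ v))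
      map_add' := fun a b => by simp only [hcadd, map_add]
      map_smul' := fun a v => by
        simp only [hcsmul, map_smul, smul_eq_mul, map_mul, Complex.conj_conj,
          RingHom.id_apply] } with hg
  suffices hgx : ∀ z : G, g z = Coalgebra.counit (R := ℂ) z by
    have h := hgx x
    calc Coalgebra.counit (R := ℂ) (circ x)
        = starRingEnd ℂ (starRingEnd ℂ (Coalgebra.counit (R := ℂ) (circ x))) :=
          (Complex.conj_conj _).symm
      _ = starRingEnd ℂ (Coalgebra.counit (R := ℂ) x) := by
          rw [show starRingEnd ℂ (Coalgebra.counit (R := ℂ) (circ x)) = g x from rfl, h]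
  intro z
  set r := natRepr.{w} (ℛ ℂ z) with hr
  have e1 : ∑ i ∈ r.index, Coalgebra.counit (R := ℂ) (circ (r.right i)) • circ (r.left i)
      = circ z := _root_.sum_counit_smul (circRepr circ hcanti z r)
  have e2 : ∑ i ∈ r.index, g (r.right i) • r.left i = z := by
    have hc := congrArg circ e1
    rw [circ_sum circ hcadd, hcinvol] at hc
    have hterm : ∀ i ∈ r.index,
        circ (Coalgebra.counit (R := ℂ) (circ (r.right i)) • circ (r.left i))
          = g (r.right i) • r.left i := by
      intro i _
      rw [hcsmul, hcinvol]; rfl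
    rw [Finset.sum_congr rfl hterm] at hc
    exact hc
  have e3 := congrArg (Coalgebra.counit (R := ℂ)) e2
  rw [map_sum] at e3
  simp only [map_smul, smul_eq_mul] at e3
  have e4 := congrArg g (_root_.sum_counit_smul r)
  rw [map_sum] at e4
  simp only [map_smul, smul_eq_mul] at e4
  calc g z = ∑ i ∈ r.index, Coalgebra.counit (R := ℂ) (r.left i) * g (r.right i) := e4.symm
    _ = ∑ i ∈ r.index, g (r.right i) * Coalgebra.counit (R := ℂ) (r.left i) :=
        Finset.sum_congr rfl fun i _ => mul_comm _ _
    _ = Coalgebra.counit (R := ℂ) z := e3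

lemma sum_right_mul_T (circ : G → G)
    (hcadd : ∀ x y : G, circ (x + y) = circ x + circ y)
    (hcsmul : ∀ (a : ℂ) (x : G), circ (a • x) = (starRingEnd ℂ) a • circ x)
    (hcinvol : ∀ x : G, circ (circ x) = x)
    (hcanti : ∀ (x : G) (ι : Type w) (r : Coalgebra.Repr ℂ x ι),
      Coalgebra.comul (R := ℂ) (circ x) =
        ∑ i ∈ r.index, circ (r.right i) ⊗ₜ[ℂ] circ (r.left i))
    (hcmul : ∀ x y : G, circ (x * y) = circ x * circ y)
    (y : G) {ι : Type w} (r : Coalgebra.Repr ℂ y ι) :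
    ∑ i ∈ r.index, r.right i * (Tlin circ hcadd hcsmul) (r.left i)
      = Coalgebra.counit (R := ℂ) y • (1 : G) := by
  have h' : ∑ i ∈ r.index, circ (r.right i) * antipode (R := ℂ) (circ (r.left i))
      = Coalgebra.counit (R := ℂ) (circ y) • (1 : G) :=
    HopfAlgebra.sum_mul_antipode_eq_smul (R := ℂ) (circRepr circ hcanti y r)
  have hc := congrArg circ h'
  rw [circ_sum circ hcadd] at hc
  have hterm : ∀ i ∈ r.index,
      circ (circ (r.right i) * antipode (R := ℂ) (circ (r.left i)))
        = r.right i * (Tlin circ hcadd hcsmul) (r.left i) := by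
    intro i _
    rw [hcmul, hcinvol]; rfl
  rw [Finset.sum_congr rfl hterm, hcsmul, circ_one circ hcinvol hcmul,
    counit_circ circ hcadd hcsmul hcinvol hcanti, Complex.conj_conj] at hc
  exact hc

lemma key_ST (circ : G → G)
    (hcadd : ∀ x y : G, circ (x + y) = circ x + circ y)
    (hcsmul : ∀ (a : ℂ) (x : G), circ (a • x) = (starRingEnd ℂ) a • circ x)
    (hcinvol : ∀ x : G, circ (circ x) = x)
    (hcanti : ∀ (x : G) (ι : Type w) (r : Coalgebra.Repr ℂ x ι),
      Coalgebra.comul (R := ℂ) (circ x) =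
        ∑ i ∈ r.index, circ (r.right i) ⊗ₜ[ℂ] circ (r.left i))
    (hcmul : ∀ x y : G, circ (x * y) = circ x * circ y)
    (x : G) :
    antipode (R := ℂ) (circ (antipode (R := ℂ) (circ x))) = x := by
  have hfg : conv mulH ((antipode (R := ℂ)).comp (Tlin circ hcadd hcsmul))
      (antipode (R := ℂ)) = cunit (1 : G) := by
    ext z
    rw [conv_apply _ _ _ (natRepr.{w} (ℛ ℂ z)), cunit_apply]
    have h2 := sum_right_mul_T circ hcadd hcsmul hcinvol hcanti hcmul z (natRepr.{w} (ℛ ℂ z))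
    have h3 := congrArg (⇑(antipode (R := ℂ))) h2
    rw [map_sum] at h3
    simp only [map_smul, my_antipode_one] at h3
    have hterm : ∀ i ∈ (natRepr.{w} (ℛ ℂ z)).index,
        mulH (((antipode (R := ℂ)).comp (Tlin circ hcadd hcsmul))
            ((natRepr.{w} (ℛ ℂ z)).left i))
          (antipode (R := ℂ) ((natRepr.{w} (ℛ ℂ z)).right i))
          = antipode (R := ℂ) ((natRepr.{w} (ℛ ℂ z)).right i *
              (Tlin circ hcadd hcsmul) ((natRepr.{w} (ℛ ℂ z)).left i)) := by
      intro i _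
      rw [my_antipode_mul]
      rfl
    rw [Finset.sum_congr rfl hterm, h3]
  have hgh : conv mulH (antipode (R := ℂ)) (LinearMap.id : G →ₗ[ℂ] G) = cunit (1 : G) := by
    ext z
    rw [conv_apply _ _ _ (ℛ ℂ z), cunit_apply]
    simpa [mulH_apply] using HopfAlgebra.sum_antipode_mul_eq_smul (R := ℂ) (ℛ ℂ z)
  have hc := conv_cancel mulH (1 : G) (fun a b c => mul_assoc a b c)
    (fun b => one_mul b) (fun b => mul_one b) hfg hgh
  exact LinearMap.congr_fun hc x

lemma phi_nondeg (circ : G → G) (φ : G →ₗ[ℂ] ℂ)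
    (hpos : ∀ x : G, x ≠ 0 →
      0 < (intInner circ φ x x).re ∧ (intInner circ φ x x).im = 0)
    (v : G) (hv : ∀ z : G, φ (z * v) = 0) : v = 0 := by
  by_contra hne
  have h1 := (hpos v hne).1
  have h2 : intInner circ φ v v = 0 := hv (antipode (R := ℂ) (circ v))
  rw [h2] at h1
  simp at h1

end AuxHopf

/-- in a compact quantum group, the Nakayama automorphism `N` is a
positive operator: `⟨N(x), x⟩ = ⟨S(x∘), S(x∘)⟩ > 0` for `x ≠ 0`; moreover `N`
commutes with `∘`. -/
theorem nakayama_positive_commutes_circ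
    (circ : H → H)
    (hcadd : ∀ x y : H, circ (x + y) = circ x + circ y)
    (hcsmul : ∀ (a : ℂ) (x : H), circ (a • x) = (starRingEnd ℂ) a • circ x)
    (hcinvol : ∀ x : H, circ (circ x) = x)
    (hcanti : ∀ (x : H) (ι : Type*) (r : Coalgebra.Repr ℂ x ι),
      Coalgebra.comul (R := ℂ) (circ x) =
        ∑ i ∈ r.index, circ (r.right i) ⊗ₜ[ℂ] circ (r.left i))
    (hcmul : ∀ x y : H, circ (x * y) = circ x * circ y)
    (φ : H →ₗ[ℂ] ℂ) (hr : IsRightIntegral φ) (hl : IsLeftIntegral φ) (hn : φ 1 = 1)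
    (hherm : ∀ x y : H, intInner circ φ y x = (starRingEnd ℂ) (intInner circ φ x y))
    (hpos : ∀ x : H, x ≠ 0 →
      0 < (intInner circ φ x x).re ∧ (intInner circ φ x x).im = 0)
    (hφcirc : ∀ x : H, φ (circ x) = (starRingEnd ℂ) (φ x))
    (N : H →ₗ[ℂ] H) (hNbij : Function.Bijective N)
    (hNmul : ∀ x y : H, N (x * y) = N x * N y) (hNone : N 1 = 1)
    (hNak : ∀ x y : H, φ (x * y) = φ (y * N x)) :
    ∀ x : H,
      (intInner circ φ (N x) x =
        intInner circ φ (antipode (R := ℂ) (circ x)) (antipode (R := ℂ) (circ x))) ∧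
      (x ≠ 0 → 0 < (intInner circ φ (N x) x).re ∧ (intInner circ φ (N x) x).im = 0) ∧
      N (circ x) = circ (N x) := by
  intro x
  have key := key_ST circ hcadd hcsmul hcinvol hcanti hcmul
  have hA : intInner circ φ (N x) x =
      intInner circ φ (antipode (R := ℂ) (circ x)) (antipode (R := ℂ) (circ x)) := by
    show φ (antipode (R := ℂ) (circ x) * N x)
        = φ (antipode (R := ℂ) (circ (antipode (R := ℂ) (circ x))) * antipode (R := ℂ) (circ x))
    rw [key x]
    exact (hNak x (antipode (R := ℂ) (circ x))).symm
  refine ⟨hA, ?_, ?_⟩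
  · intro hx
    have hS : antipode (R := ℂ) (circ x) ≠ 0 := by
      intro h0
      have h1 := (hpos x hx).1
      have h2 : intInner circ φ x x = 0 := by
        show φ (antipode (R := ℂ) (circ x) * x) = 0
        rw [h0, zero_mul, map_zero]
      rw [h2] at h1
      simp at h1
    rw [hA]
    exact hpos _ hS
  · have hz : ∀ z : H, φ (z * (N (circ x) - circ (N x))) = 0 := by
      intro z
      rw [mul_sub, map_sub, sub_eq_zero]
      calc φ (z * N (circ x)) = φ (circ x * z) := (hNak (circ x) z).symm
        _ = φ (circ (x * circ z)) := by rw [hcmul, hcinvol]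
        _ = starRingEnd ℂ (φ (x * circ z)) := hφcirc _
        _ = starRingEnd ℂ (φ (circ z * N x)) := by rw [hNak x (circ z)]
        _ = φ (circ (circ z * N x)) := (hφcirc _).symm
        _ = φ (z * circ (N x)) := by rw [hcmul, hcinvol]
    exact sub_eq_zero.mp (phi_nondeg circ φ hpos _ hz)
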